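/- arXiv:2010.04590 — 2 statements merged into one kernel-verified Lean document; each statement's English description precedes it below -/
import Mathlib

section
/- Let V be a finite-dimensional real vector space equipped with a quadratic form Q, and let Q₂ denote the standard positive-definite quadratic form (x, y) ↦ x² + y² on ℝ². For any vectors t ∈ V and v ∈ ℝ², the element t ⊗ (e₁ · e₂) + 1 ⊗ ι(v) of the tensor product algebra CliffordAlgebra(−Q) ⊗[ℝ] CliffordAlgebra(Q₂) — where e₁ and e₂ are the images under the canonical map ι of the standard basis vectors of ℝ², and t is taken under the canonical map ι : V → CliffordAlgebra(−Q) — squares to (Q(t) + Q₂(v)) · 1. -/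
open scoped TensorProduct
open CliffordAlgebra

/-- The standard positive-definite quadratic form `(x, y) ↦ x² + y²` on `ℝ²`. -/
noncomputable def Q₂ : QuadraticForm ℝ (ℝ × ℝ) :=
  QuadraticMap.prod QuadraticMap.sq QuadraticMap.sq

lemma Q₂_apply (v : ℝ × ℝ) : Q₂ v = v.1 ^ 2 + v.2 ^ 2 := by
  simp [Q₂, QuadraticMap.prod_apply, QuadraticMap.sq, sq]

set_option maxHeartbeats 1000000 in
set_option synthInstance.maxHeartbeats 200000 in
/-- For `t ∈ V` and `v ∈ ℝ²`, the element `t ⊗ (e₁ e₂) + 1 ⊗ ι(v)` of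
`CliffordAlgebra (−Q) ⊗[ℝ] CliffordAlgebra Q₂` squares to `(Q t + Q₂ v) • 1`. -/
theorem square_of_twisting_element
    (V : Type*) [AddCommGroup V] [Module ℝ V] [FiniteDimensional ℝ V]
    (Q : QuadraticForm ℝ V) (t : V) (v : ℝ × ℝ) :
    let e₁ : CliffordAlgebra Q₂ := ι Q₂ ((1 : ℝ), (0 : ℝ))
    let e₂ : CliffordAlgebra Q₂ := ι Q₂ ((0 : ℝ), (1 : ℝ))
    let x : CliffordAlgebra (-Q) ⊗[ℝ] CliffordAlgebra Q₂ :=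
      (ι (-Q) t) ⊗ₜ[ℝ] (e₁ * e₂) + 1 ⊗ₜ[ℝ] (ι Q₂ v)
    x * x = algebraMap ℝ (CliffordAlgebra (-Q) ⊗[ℝ] CliffordAlgebra Q₂) (Q t + Q₂ v) := by
  intro e₁ e₂ x
  have h11 : e₁ * e₁ = 1 := by
    rw [show e₁ * e₁ = _ from ι_sq_scalar Q₂ _, Q₂_apply]; norm_num
  have h22 : e₂ * e₂ = 1 := by
    rw [show e₂ * e₂ = _ from ι_sq_scalar Q₂ _, Q₂_apply]; norm_num
  have hortho : Q₂.IsOrtho ((1 : ℝ), (0 : ℝ)) ((0 : ℝ), (1 : ℝ)) := by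
    simp [QuadraticMap.IsOrtho, Q₂_apply]
  have h21 : e₂ * e₁ = -(e₁ * e₂) := ι_mul_ι_comm_of_isOrtho hortho.symm
  have p121 : e₁ * e₂ * e₁ = -e₂ := by
    rw [mul_assoc, h21, mul_neg, ← mul_assoc, h11, one_mul]
  have p122 : e₁ * e₂ * e₂ = e₁ := by rw [mul_assoc, h22, mul_one]
  have p112 : e₁ * (e₁ * e₂) = e₂ := by rw [← mul_assoc, h11, one_mul]
  have p212 : e₂ * (e₁ * e₂) = -e₁ := by
    rw [← mul_assoc, h21, neg_mul, mul_assoc, h22, mul_one]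
  have hsq : (e₁ * e₂) * (e₁ * e₂) = -1 := by
    rw [← mul_assoc, p121, neg_mul, h22]
  have hv : ι Q₂ v = v.1 • e₁ + v.2 • e₂ := by
    show _ = v.1 • ι Q₂ _ + v.2 • ι Q₂ _
    rw [← map_smul, ← map_smul, ← map_add]
    congr 1
    simp [Prod.ext_iff]
  have hanti : (e₁ * e₂) * ι Q₂ v + ι Q₂ v * (e₁ * e₂) = 0 := by
    rw [hv, mul_add, add_mul, mul_smul_comm, mul_smul_comm, smul_mul_assoc, smul_mul_assoc,
      p121, p122, p112, p212]
    module
  have hvsq : ι Q₂ v * ι Q₂ v = algebraMap ℝ _ (Q₂ v) := ι_sq_scalar Q₂ v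
  have htsq : ι (-Q) t * ι (-Q) t = algebraMap ℝ _ (-(Q t)) := by
    rw [ι_sq_scalar]; simp
  have h1 : (algebraMap ℝ (CliffordAlgebra (-Q)) (-(Q t))) ⊗ₜ[ℝ] (-1 : CliffordAlgebra Q₂) =
      algebraMap ℝ (CliffordAlgebra (-Q) ⊗[ℝ] CliffordAlgebra Q₂) (Q t) := by
    rw [Algebra.algebraMap_eq_smul_one, ← TensorProduct.smul_tmul', TensorProduct.tmul_neg,
      Algebra.algebraMap_eq_smul_one (A := CliffordAlgebra (-Q) ⊗[ℝ] CliffordAlgebra Q₂),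
      Algebra.TensorProduct.one_def]
    module
  have h2 : (1 : CliffordAlgebra (-Q)) ⊗ₜ[ℝ] (algebraMap ℝ (CliffordAlgebra Q₂) (Q₂ v)) =
      algebraMap ℝ (CliffordAlgebra (-Q) ⊗[ℝ] CliffordAlgebra Q₂) (Q₂ v) := by
    rw [Algebra.algebraMap_eq_smul_one, TensorProduct.tmul_smul,
      Algebra.algebraMap_eq_smul_one (A := CliffordAlgebra (-Q) ⊗[ℝ] CliffordAlgebra Q₂),
      Algebra.TensorProduct.one_def]
  have hc2 : (ι (-Q)) t ⊗ₜ[ℝ] ((ι Q₂) v * (e₁ * e₂)) =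
      -((ι (-Q)) t ⊗ₜ[ℝ] (e₁ * e₂ * (ι Q₂) v)) := by
    rw [← TensorProduct.tmul_neg]
    congr 1
    exact eq_neg_of_add_eq_zero_left (by rw [add_comm]; exact hanti)
  show ((ι (-Q) t) ⊗ₜ[ℝ] (e₁ * e₂) + 1 ⊗ₜ[ℝ] (ι Q₂ v)) *
      ((ι (-Q) t) ⊗ₜ[ℝ] (e₁ * e₂) + 1 ⊗ₜ[ℝ] (ι Q₂ v)) = _
  rw [mul_add, add_mul, add_mul]
  simp only [Algebra.TensorProduct.tmul_mul_tmul, one_mul, mul_one]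
  rw [hsq, hvsq, htsq, h1, h2, hc2, RingHom.map_add]
  abel
end

section
/- Let V be a finite-dimensional real vector space equipped with a quadratic form Q, and let Q₂ denote the standard positive-definite quadratic form (x, y) ↦ x² + y² on ℝ². Then the Clifford algebra CliffordAlgebra(Q.prod Q₂) is isomorphic as an ℝ-algebra to the algebra of 2 × 2 matrices over CliffordAlgebra(−Q), i.e. to Matrix (Fin 2) (Fin 2) (CliffordAlgebra(−Q)). -/
open CliffordAlgebra

namespace KaroubiAux

/-! ### Generic facts about a pair of anticommuting square roots of one -/

section generic
variable {A : Type*} [Ring A] {x y : A}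
  (hx : x * x = 1) (hy : y * y = 1) (hxy : y * x = -(x * y))

include hxy hx hy in
lemma gen_omega_sq : (x * y) * (x * y) = -1 := by
  calc (x * y) * (x * y) = x * ((y * x) * y) := by noncomm_ring
    _ = x * ((-(x * y)) * y) := by rw [hxy]
    _ = -((x * x) * (y * y)) := by noncomm_ring
    _ = -1 := by rw [hx, hy, one_mul]

include hxy hx in
lemma gen_x_omega : x * (x * y) + (x * y) * x = 0 := by
  have h1 : x * (x * y) = y := by rw [← mul_assoc, hx, one_mul]
  have h2 : (x * y) * x = -y := by
    calc (x * y) * x = x * (y * x) := by rw [mul_assoc]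
      _ = -(x * (x * y)) := by rw [hxy, mul_neg]
      _ = -y := by rw [h1]
  rw [h1, h2, add_neg_cancel]

include hxy hy in
lemma gen_y_omega : y * (x * y) + (x * y) * y = 0 := by
  have h2 : (x * y) * y = x := by rw [mul_assoc, hy, mul_one]
  have h1 : y * (x * y) = -x := by
    calc y * (x * y) = (y * x) * y := by rw [mul_assoc]
      _ = -((x * y) * y) := by rw [hxy, neg_mul]
      _ = -x := by rw [h2]
  rw [h1, h2, neg_add_cancel]

end generic

/-! ### `CliffordAlgebra Q₂ ≃ₐ[ℝ] Matrix (Fin 2) (Fin 2) ℝ` -/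

lemma Q₂_apply (v : ℝ × ℝ) : Q₂ v = v.1 * v.1 + v.2 * v.2 := rfl

noncomputable abbrev E₁ : CliffordAlgebra Q₂ := ι Q₂ (1, 0)
noncomputable abbrev E₂ : CliffordAlgebra Q₂ := ι Q₂ (0, 1)

lemma hE₁ : E₁ * E₁ = 1 := by
  rw [ι_sq_scalar, Q₂_apply]; norm_num

lemma hE₂ : E₂ * E₂ = 1 := by
  rw [ι_sq_scalar, Q₂_apply]; norm_num

lemma hE₂₁ : E₂ * E₁ = -(E₁ * E₂) := by
  refine ι_mul_ι_comm_of_isOrtho ?_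
  show Q₂ ((0,1) + (1,0)) = Q₂ (0,1) + Q₂ (1,0)
  simp [Q₂_apply]

/-- The linear map `(x, y) ↦ !![x, y; y, -x]`. -/
noncomputable def fMat : (ℝ × ℝ) →ₗ[ℝ] Matrix (Fin 2) (Fin 2) ℝ where
  toFun v := !![v.1, v.2; v.2, -v.1]
  map_add' v w := by ext i j; fin_cases i <;> fin_cases j <;> simp [add_comm]
  map_smul' r v := by ext i j; fin_cases i <;> fin_cases j <;> simp [mul_comm]

lemma fMat_apply (v : ℝ × ℝ) : fMat v = !![v.1, v.2; v.2, -v.1] := rfl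

lemma fMat_sq (v : ℝ × ℝ) : fMat v * fMat v = algebraMap ℝ _ (Q₂ v) := by
  ext i j
  fin_cases i <;> fin_cases j <;>
    simp [fMat, Matrix.mul_apply, Fin.sum_univ_two, Q₂_apply,
      Matrix.algebraMap_matrix_apply] <;>
    ring

/-- The algebra map `CliffordAlgebra Q₂ →ₐ[ℝ] Matrix (Fin 2) (Fin 2) ℝ`. -/
noncomputable def toMat : CliffordAlgebra Q₂ →ₐ[ℝ] Matrix (Fin 2) (Fin 2) ℝ :=
  CliffordAlgebra.lift Q₂ ⟨fMat, fMat_sq⟩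

lemma toMat_ι (v : ℝ × ℝ) : toMat (ι Q₂ v) = !![v.1, v.2; v.2, -v.1] :=
  CliffordAlgebra.lift_ι_apply _ _ v

lemma toMat_surjective : Function.Surjective toMat := by
  rw [← AlgHom.range_eq_top, eq_top_iff]
  rintro m -
  have hD : (!![1,0;0,-1] : Matrix (Fin 2) (Fin 2) ℝ) ∈ toMat.range :=
    ⟨ι Q₂ (1,0), by simpa using toMat_ι (1,0)⟩
  have hS : (!![0,1;1,0] : Matrix (Fin 2) (Fin 2) ℝ) ∈ toMat.range :=
    ⟨ι Q₂ (0,1), by simpa using toMat_ι (0,1)⟩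
  have h00 : (!![1,0;0,0] : Matrix (Fin 2) (Fin 2) ℝ) ∈ toMat.range := by
    have : (!![1,0;0,0] : Matrix (Fin 2) (Fin 2) ℝ)
        = (2⁻¹ : ℝ) • (1 + !![1,0;0,-1]) := by
      ext i j; fin_cases i <;> fin_cases j <;>
        simp [Matrix.one_apply] <;> norm_num
    rw [this]
    exact Subalgebra.smul_mem _ (Subalgebra.add_mem _ (Subalgebra.one_mem _) hD) _
  have h11 : (!![0,0;0,1] : Matrix (Fin 2) (Fin 2) ℝ) ∈ toMat.range := by
    have : (!![0,0;0,1] : Matrix (Fin 2) (Fin 2) ℝ) = 1 - !![1,0;0,0] := by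
      ext i j; fin_cases i <;> fin_cases j <;> simp [Matrix.one_apply]
    rw [this]; exact Subalgebra.sub_mem _ (Subalgebra.one_mem _) h00
  have h01 : (!![0,1;0,0] : Matrix (Fin 2) (Fin 2) ℝ) ∈ toMat.range := by
    have : (!![0,1;0,0] : Matrix (Fin 2) (Fin 2) ℝ) = !![1,0;0,0] * !![0,1;1,0] := by
      ext i j; fin_cases i <;> fin_cases j <;>
        simp [Matrix.mul_apply, Fin.sum_univ_two]
    rw [this]; exact Subalgebra.mul_mem _ h00 hS
  have h10 : (!![0,0;1,0] : Matrix (Fin 2) (Fin 2) ℝ) ∈ toMat.range := by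
    have : (!![0,0;1,0] : Matrix (Fin 2) (Fin 2) ℝ) = !![0,1;1,0] * !![1,0;0,0] := by
      ext i j; fin_cases i <;> fin_cases j <;>
        simp [Matrix.mul_apply, Fin.sum_univ_two]
    rw [this]; exact Subalgebra.mul_mem _ hS h00
  have : m = m 0 0 • !![1,0;0,0] + m 0 1 • !![0,1;0,0]
      + m 1 0 • !![0,0;1,0] + m 1 1 • !![0,0;0,1] := by
    ext i j; fin_cases i <;> fin_cases j <;> simp
  rw [this]
  exact Subalgebra.add_mem _
    (Subalgebra.add_mem _
      (Subalgebra.add_mem _ (Subalgebra.smul_mem _ h00 _) (Subalgebra.smul_mem _ h01 _))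
      (Subalgebra.smul_mem _ h10 _))
    (Subalgebra.smul_mem _ h11 _)

lemma Q₂_eq : Q₂ = CliffordAlgebraQuaternion.Q (1 : ℝ) 1 := by
  ext v
  simp [Q₂_apply, CliffordAlgebraQuaternion.Q_apply]

lemma finrank_cliffordQ₂ : Module.finrank ℝ (CliffordAlgebra Q₂) = 4 := by
  rw [Q₂_eq]
  rw [(CliffordAlgebraQuaternion.equiv (R := ℝ) (c₁ := 1) (c₂ := 1)).toLinearEquiv.finrank_eq]
  exact QuaternionAlgebra.finrank_eq_four 1 0 1

instance : FiniteDimensional ℝ (CliffordAlgebra Q₂) := by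
  rw [Q₂_eq]
  exact Module.Finite.equiv
    (CliffordAlgebraQuaternion.equiv (R := ℝ) (c₁ := 1) (c₂ := 1)).toLinearEquiv.symm

lemma toMat_injective : Function.Injective toMat := by
  have h : Module.finrank ℝ (CliffordAlgebra Q₂)
      = Module.finrank ℝ (Matrix (Fin 2) (Fin 2) ℝ) := by
    rw [finrank_cliffordQ₂, Module.finrank_matrix, Fintype.card_fin, Module.finrank_self]
  exact (LinearMap.injective_iff_surjective_of_finrank_eq_finrank
    (f := toMat.toLinearMap) h).mpr toMat_surjective

/-- `CliffordAlgebra Q₂` is the algebra of 2×2 real matrices. -/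
noncomputable def matEquiv : CliffordAlgebra Q₂ ≃ₐ[ℝ] Matrix (Fin 2) (Fin 2) ℝ :=
  AlgEquiv.ofBijective toMat ⟨toMat_injective, toMat_surjective⟩

/-! ### `CliffordAlgebra (Q.prod Q₂) ≃ₐ[ℝ] CliffordAlgebra (-Q) ⊗[ℝ] CliffordAlgebra Q₂` -/

open scoped TensorProduct

variable {V : Type*} [AddCommGroup V] [Module ℝ V] (Q : QuadraticForm ℝ V)

local notation "Qp" => QuadraticMap.prod Q Q₂

lemma Qp_apply (v : V) (w : ℝ × ℝ) : (Qp) (v, w) = Q v + Q₂ w := rfl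

noncomputable abbrev ω : CliffordAlgebra Q₂ := E₁ * E₂

lemma omega_sq : ω * ω = -1 := gen_omega_sq hE₁ hE₂ hE₂₁

lemma omega_anti (w : ℝ × ℝ) : ι Q₂ w * ω + ω * ι Q₂ w = 0 := by
  have hw : w = w.1 • ((1 : ℝ), (0 : ℝ)) + w.2 • ((0 : ℝ), (1 : ℝ)) := by
    ext <;> simp
  rw [hw, map_add, map_smul, map_smul, add_mul, mul_add, smul_mul_assoc, smul_mul_assoc,
    mul_smul_comm, mul_smul_comm]
  have h1 := gen_x_omega hE₁ hE₂₁
  have h2 := gen_y_omega hE₂ hE₂₁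
  rw [show w.1 • (E₁ * ω) + w.2 • (E₂ * ω) + (w.1 • (ω * E₁) + w.2 • (ω * E₂))
      = w.1 • (E₁ * ω + ω * E₁) + w.2 • (E₂ * ω + ω * E₂) from by
        rw [smul_add, smul_add]; abel,
    h1, h2, smul_zero, smul_zero, add_zero]

noncomputable abbrev Ep₁ : CliffordAlgebra (Qp) := ι (Qp) (0, (1, 0))
noncomputable abbrev Ep₂ : CliffordAlgebra (Qp) := ι (Qp) (0, (0, 1))

lemma hEp₁ : Ep₁ Q * Ep₁ Q = 1 := by
  rw [ι_sq_scalar]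
  rw [show (Qp) (0, ((1:ℝ), (0:ℝ))) = 1 from by simp [Qp_apply, Q₂_apply]]
  exact map_one _

lemma hEp₂ : Ep₂ Q * Ep₂ Q = 1 := by
  rw [ι_sq_scalar]
  rw [show (Qp) (0, ((0:ℝ), (1:ℝ))) = 1 from by simp [Qp_apply, Q₂_apply]]
  exact map_one _

lemma hEp₂₁ : Ep₂ Q * Ep₁ Q = -(Ep₁ Q * Ep₂ Q) := by
  refine ι_mul_ι_comm_of_isOrtho ?_
  show (Qp) ((0,(0,1)) + (0,(1,0))) = (Qp) (0,(0,1)) + (Qp) (0,(1,0))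
  simp [Qp_apply, Q₂_apply]

noncomputable abbrev Ω : CliffordAlgebra (Qp) := Ep₁ Q * Ep₂ Q

lemma Omega_sq : Ω Q * Ω Q = -1 := gen_omega_sq (hEp₁ Q) (hEp₂ Q) (hEp₂₁ Q)

lemma Omega_anti (w : ℝ × ℝ) :
    ι (Qp) (0, w) * Ω Q + Ω Q * ι (Qp) (0, w) = 0 := by
  have hw : ((0 : V), w) = w.1 • ((0 : V), ((1 : ℝ), (0 : ℝ)))
      + w.2 • ((0 : V), ((0 : ℝ), (1 : ℝ))) := by
    ext <;> simp
  rw [hw, map_add, map_smul, map_smul, add_mul, mul_add, smul_mul_assoc, smul_mul_assoc,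
    mul_smul_comm, mul_smul_comm]
  have h1 := gen_x_omega (hEp₁ Q) (hEp₂₁ Q)
  have h2 := gen_y_omega (hEp₂ Q) (hEp₂₁ Q)
  rw [show w.1 • (Ep₁ Q * Ω Q) + w.2 • (Ep₂ Q * Ω Q)
        + (w.1 • (Ω Q * Ep₁ Q) + w.2 • (Ω Q * Ep₂ Q))
      = w.1 • (Ep₁ Q * Ω Q + Ω Q * Ep₁ Q) + w.2 • (Ep₂ Q * Ω Q + Ω Q * Ep₂ Q) from by
        rw [smul_add, smul_add]; abel,
    h1, h2, smul_zero, smul_zero, add_zero]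

lemma inl_anti (v : V) (w : ℝ × ℝ) :
    ι (Qp) (0, w) * ι (Qp) (v, 0) = -(ι (Qp) (v, 0) * ι (Qp) (0, w)) := by
  refine ι_mul_ι_comm_of_isOrtho ?_
  show (Qp) ((0,w) + (v,0)) = (Qp) (0,w) + (Qp) (v,0)
  simp only [Prod.mk_add_mk, add_zero, zero_add, Qp_apply, QuadraticMap.map_zero]
  abel

lemma inl_comm_Omega (v : V) : ι (Qp) (v, 0) * Ω Q = Ω Q * ι (Qp) (v, 0) := by
  have h1 := inl_anti Q v (1, 0)
  have h2 := inl_anti Q v (0, 1)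
  calc ι (Qp) (v, 0) * (Ep₁ Q * Ep₂ Q) = (ι (Qp) (v, 0) * Ep₁ Q) * Ep₂ Q := by
        rw [mul_assoc]
    _ = (-(Ep₁ Q * ι (Qp) (v, 0))) * Ep₂ Q := by
        rw [show ι (Qp) (v, 0) * Ep₁ Q = -(Ep₁ Q * ι (Qp) (v, 0)) from by
          linear_combination (norm := noncomm_ring) h1]
    _ = Ep₁ Q * (-(ι (Qp) (v, 0) * Ep₂ Q)) := by noncomm_ring
    _ = Ep₁ Q * (Ep₂ Q * ι (Qp) (v, 0)) := by rw [← h2]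
    _ = Ω Q * ι (Qp) (v, 0) := by rw [← mul_assoc]

lemma tmul_algebraMap_left (r : ℝ) :
    (algebraMap ℝ (CliffordAlgebra (-Q)) r) ⊗ₜ[ℝ] (1 : CliffordAlgebra Q₂)
      = algebraMap ℝ (CliffordAlgebra (-Q) ⊗[ℝ] CliffordAlgebra Q₂) r := by
  rw [Algebra.algebraMap_eq_smul_one, ← TensorProduct.smul_tmul',
    ← Algebra.TensorProduct.one_def, ← Algebra.algebraMap_eq_smul_one]

lemma tmul_algebraMap_right (r : ℝ) :
    (1 : CliffordAlgebra (-Q)) ⊗ₜ[ℝ] (algebraMap ℝ (CliffordAlgebra Q₂) r)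
      = algebraMap ℝ (CliffordAlgebra (-Q) ⊗[ℝ] CliffordAlgebra Q₂) r := by
  rw [Algebra.algebraMap_eq_smul_one, TensorProduct.tmul_smul,
    ← Algebra.TensorProduct.one_def, ← Algebra.algebraMap_eq_smul_one]

/-- The defining linear map of the forward morphism. -/
noncomputable def fLin : (V × (ℝ × ℝ)) →ₗ[ℝ]
    (CliffordAlgebra (-Q) ⊗[ℝ] CliffordAlgebra Q₂) :=
  LinearMap.coprod
    (((TensorProduct.mk ℝ (CliffordAlgebra (-Q)) (CliffordAlgebra Q₂)).flip ω) ∘ₗ ι (-Q))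
    (Algebra.TensorProduct.includeRight.toLinearMap ∘ₗ ι Q₂)

lemma fLin_apply (v : V) (w : ℝ × ℝ) :
    fLin Q (v, w) = ι (-Q) v ⊗ₜ[ℝ] ω + 1 ⊗ₜ[ℝ] ι Q₂ w := rfl

lemma fLin_sq (vw : V × (ℝ × ℝ)) :
    fLin Q vw * fLin Q vw = algebraMap ℝ _ ((Qp) vw) := by
  obtain ⟨v, w⟩ := vw
  have hanti : ω * ι Q₂ w + ι Q₂ w * ω = 0 := by
    linear_combination (norm := noncomm_ring) omega_anti w
  calc fLin Q (v, w) * fLin Q (v, w)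
      = (ι (-Q) v * ι (-Q) v) ⊗ₜ[ℝ] (ω * ω)
        + ι (-Q) v ⊗ₜ[ℝ] (ω * ι Q₂ w + ι Q₂ w * ω)
        + (1 : CliffordAlgebra (-Q)) ⊗ₜ[ℝ] (ι Q₂ w * ι Q₂ w) := by
        rw [fLin_apply, add_mul, mul_add, mul_add, Algebra.TensorProduct.tmul_mul_tmul,
          Algebra.TensorProduct.tmul_mul_tmul, Algebra.TensorProduct.tmul_mul_tmul,
          Algebra.TensorProduct.tmul_mul_tmul, mul_one, one_mul, one_mul,
          TensorProduct.tmul_add]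
        abel
    _ = (algebraMap ℝ (CliffordAlgebra (-Q)) (-(Q v))) ⊗ₜ[ℝ] (-1 : CliffordAlgebra Q₂)
        + 0
        + (1 : CliffordAlgebra (-Q)) ⊗ₜ[ℝ] (algebraMap ℝ (CliffordAlgebra Q₂) (Q₂ w)) := by
        rw [ι_sq_scalar, ι_sq_scalar, omega_sq, hanti, TensorProduct.tmul_zero,
          QuadraticMap.neg_apply]
    _ = algebraMap ℝ _ (Q v) + algebraMap ℝ _ (Q₂ w) := by
        rw [add_zero, map_neg, TensorProduct.neg_tmul, TensorProduct.tmul_neg, neg_neg,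
          tmul_algebraMap_left, tmul_algebraMap_right]
    _ = algebraMap ℝ _ ((Qp) (v, w)) := by rw [Qp_apply, RingHom.map_add]

/-- The forward morphism. -/
noncomputable def Fwd : CliffordAlgebra (Qp) →ₐ[ℝ]
    (CliffordAlgebra (-Q) ⊗[ℝ] CliffordAlgebra Q₂) :=
  CliffordAlgebra.lift (Qp) ⟨fLin Q, fLin_sq Q⟩

lemma Fwd_ι (v : V) (w : ℝ × ℝ) :
    Fwd Q (ι (Qp) (v, w)) = ι (-Q) v ⊗ₜ[ℝ] ω + 1 ⊗ₜ[ℝ] ι Q₂ w :=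
  CliffordAlgebra.lift_ι_apply _ _ _

/-- The defining linear map of `G₁`. -/
noncomputable def gLin : V →ₗ[ℝ] CliffordAlgebra (Qp) :=
  -((LinearMap.mulRight ℝ (Ω Q)) ∘ₗ (ι (Qp)) ∘ₗ (LinearMap.inl ℝ V (ℝ × ℝ)))

lemma gLin_apply (v : V) : gLin Q v = -(ι (Qp) (v, 0) * Ω Q) := rfl

lemma gLin_sq (v : V) : gLin Q v * gLin Q v = algebraMap ℝ _ ((-Q) v) := by
  rw [gLin_apply, neg_mul_neg]
  calc (ι (Qp) (v, 0) * Ω Q) * (ι (Qp) (v, 0) * Ω Q)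
      = ι (Qp) (v, 0) * (Ω Q * ι (Qp) (v, 0)) * Ω Q := by noncomm_ring
    _ = ι (Qp) (v, 0) * (ι (Qp) (v, 0) * Ω Q) * Ω Q := by rw [← inl_comm_Omega]
    _ = (ι (Qp) (v, 0) * ι (Qp) (v, 0)) * (Ω Q * Ω Q) := by noncomm_ring
    _ = algebraMap ℝ _ ((Qp) (v, 0)) * (-1) := by rw [ι_sq_scalar, Omega_sq]
    _ = algebraMap ℝ _ ((-Q) v) := by
        rw [Qp_apply, QuadraticMap.map_zero, add_zero,
          QuadraticMap.neg_apply, map_neg, mul_neg_one]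

/-- The left factor of the inverse morphism. -/
noncomputable def G₁ : CliffordAlgebra (-Q) →ₐ[ℝ] CliffordAlgebra (Qp) :=
  CliffordAlgebra.lift (-Q) ⟨gLin Q, gLin_sq Q⟩

lemma G₁_ι (v : V) : G₁ Q (ι (-Q) v) = -(ι (Qp) (v, 0) * Ω Q) :=
  CliffordAlgebra.lift_ι_apply _ _ _

/-- The right factor of the inverse morphism. -/
noncomputable def G₂ : CliffordAlgebra Q₂ →ₐ[ℝ] CliffordAlgebra (Qp) :=
  CliffordAlgebra.map (QuadraticMap.Isometry.inr Q Q₂)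

lemma G₂_ι (w : ℝ × ℝ) : G₂ Q (ι Q₂ w) = ι (Qp) (0, w) :=
  CliffordAlgebra.map_apply_ι _ _

lemma G_comm : ∀ (x : CliffordAlgebra (-Q)) (y : CliffordAlgebra Q₂),
    Commute (G₁ Q x) (G₂ Q y) := by
  intro x y
  induction x using CliffordAlgebra.induction with
  | algebraMap r => rw [AlgHom.commutes]; exact Algebra.commute_algebraMap_left r _
  | add x₁ x₂ h₁ h₂ => rw [map_add]; exact h₁.add_left h₂
  | mul x₁ x₂ h₁ h₂ => rw [map_mul]; exact h₁.mul_left h₂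
  | ι v =>
    induction y using CliffordAlgebra.induction with
    | algebraMap r => rw [AlgHom.commutes]; exact Algebra.commute_algebraMap_right r _
    | add y₁ y₂ h₁ h₂ => rw [map_add]; exact h₁.add_right h₂
    | mul y₁ y₂ h₁ h₂ => rw [map_mul]; exact h₁.mul_right h₂
    | ι w =>
      rw [G₁_ι, G₂_ι]
      show -(ι (Qp) (v, 0) * Ω Q) * ι (Qp) (0, w)
          = ι (Qp) (0, w) * -(ι (Qp) (v, 0) * Ω Q)
      have hΩw : Ω Q * ι (Qp) (0, w) = -(ι (Qp) (0, w) * Ω Q) := by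
        linear_combination (norm := noncomm_ring) Omega_anti Q w
      calc -(ι (Qp) (v, 0) * Ω Q) * ι (Qp) (0, w)
          = -(ι (Qp) (v, 0) * (Ω Q * ι (Qp) (0, w))) := by noncomm_ring
        _ = ι (Qp) (v, 0) * (ι (Qp) (0, w) * Ω Q) := by rw [hΩw]; noncomm_ring
        _ = (ι (Qp) (v, 0) * ι (Qp) (0, w)) * Ω Q := by noncomm_ring
        _ = (-(ι (Qp) (0, w) * ι (Qp) (v, 0))) * Ω Q := by
            rw [show ι (Qp) (v, 0) * ι (Qp) (0, w)
                = -(ι (Qp) (0, w) * ι (Qp) (v, 0)) from by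
              linear_combination (norm := noncomm_ring) inl_anti Q v w]
        _ = ι (Qp) (0, w) * -(ι (Qp) (v, 0) * Ω Q) := by noncomm_ring

/-- The inverse morphism. -/
noncomputable def Bwd : (CliffordAlgebra (-Q) ⊗[ℝ] CliffordAlgebra Q₂) →ₐ[ℝ]
    CliffordAlgebra (Qp) :=
  Algebra.TensorProduct.lift (G₁ Q) (G₂ Q) (G_comm Q)

lemma Bwd_tmul (a : CliffordAlgebra (-Q)) (b : CliffordAlgebra Q₂) :
    Bwd Q (a ⊗ₜ[ℝ] b) = G₁ Q a * G₂ Q b :=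
  Algebra.TensorProduct.lift_tmul _ _ _ _ _

lemma Bwd_Fwd : (Bwd Q).comp (Fwd Q) = AlgHom.id ℝ _ := by
  refine CliffordAlgebra.hom_ext (LinearMap.ext fun vw => ?_)
  obtain ⟨v, w⟩ := vw
  simp only [LinearMap.comp_apply, AlgHom.toLinearMap_apply, AlgHom.comp_apply,
    AlgHom.coe_id, id_eq]
  rw [Fwd_ι, map_add, Bwd_tmul, Bwd_tmul, map_one, one_mul, G₁_ι]
  rw [show (ω : CliffordAlgebra Q₂) = E₁ * E₂ from rfl, map_mul, G₂_ι, G₂_ι, G₂_ι]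
  rw [show -(ι (Qp) (v, 0) * Ω Q) * (Ep₁ Q * Ep₂ Q)
      = -(ι (Qp) (v, 0) * (Ω Q * Ω Q)) from by noncomm_ring, Omega_sq]
  rw [show -(ι (Qp) (v, 0) * (-1 : CliffordAlgebra (Qp))) = ι (Qp) (v, 0) from by
    noncomm_ring]
  rw [← map_add]
  congr 1
  ext <;> simp

lemma Fwd_Bwd : (Fwd Q).comp (Bwd Q) = AlgHom.id ℝ _ := by
  refine Algebra.TensorProduct.ext ?_ ?_
  · refine CliffordAlgebra.hom_ext (LinearMap.ext fun v => ?_)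
    simp only [LinearMap.comp_apply, AlgHom.toLinearMap_apply, AlgHom.comp_apply,
      Algebra.TensorProduct.includeLeft_apply, AlgHom.coe_id, id_eq]
    rw [Bwd_tmul, map_one, mul_one, G₁_ι, map_neg, map_mul]
    have hF0 : Fwd Q (ι (Qp) (v, 0)) = ι (-Q) v ⊗ₜ[ℝ] ω := by
      rw [Fwd_ι, map_zero, TensorProduct.tmul_zero, add_zero]
    have hFe₁ : Fwd Q (Ep₁ Q) = 1 ⊗ₜ[ℝ] E₁ := by
      rw [Fwd_ι, map_zero, TensorProduct.zero_tmul, zero_add]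
    have hFe₂ : Fwd Q (Ep₂ Q) = 1 ⊗ₜ[ℝ] E₂ := by
      rw [Fwd_ι, map_zero, TensorProduct.zero_tmul, zero_add]
    rw [show Fwd Q (Ω Q) = Fwd Q (Ep₁ Q) * Fwd Q (Ep₂ Q) from map_mul _ _ _,
      hF0, hFe₁, hFe₂]
    simp only [Algebra.TensorProduct.tmul_mul_tmul, one_mul, mul_one]
    rw [show (ω : CliffordAlgebra Q₂) * (E₁ * E₂) = -1 from omega_sq,
      TensorProduct.tmul_neg, neg_neg]
  · refine CliffordAlgebra.hom_ext (LinearMap.ext fun w => ?_)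
    simp only [LinearMap.comp_apply, AlgHom.toLinearMap_apply, AlgHom.comp_apply,
      AlgHom.coe_restrictScalars', Algebra.TensorProduct.includeRight_apply,
      AlgHom.coe_id, id_eq]
    rw [Bwd_tmul, map_one, one_mul, G₂_ι, Fwd_ι, map_zero, TensorProduct.zero_tmul,
      zero_add]

/-- The graded-twist tensor decomposition. -/
noncomputable def prodEquivTensor : CliffordAlgebra (Qp) ≃ₐ[ℝ]
    (CliffordAlgebra (-Q) ⊗[ℝ] CliffordAlgebra Q₂) :=
  AlgEquiv.ofAlgHom (Fwd Q) (Bwd Q) (Fwd_Bwd Q) (Bwd_Fwd Q)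

end KaroubiAux

/-- Karoubi: `C⁺(T+2)` is isomorphic to a `2 × 2` matrix algebra over `C⁻(T)`. -/
theorem clifford_prod_iso_matrix
    (V : Type*) [AddCommGroup V] [Module ℝ V] [FiniteDimensional ℝ V]
    (Q : QuadraticForm ℝ V) :
    Nonempty (CliffordAlgebra (Q.prod Q₂) ≃ₐ[ℝ]
      Matrix (Fin 2) (Fin 2) (CliffordAlgebra (-Q))) := by
  refine ⟨(KaroubiAux.prodEquivTensor Q).trans ?_⟩
  exact (Algebra.TensorProduct.congr AlgEquiv.refl KaroubiAux.matEquiv).trans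
    (matrixEquivTensor (Fin 2) ℝ (CliffordAlgebra (-Q))).symm
end
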